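/- Let a₁,…,a_n be integers and ∂_f the K-linear endomorphism of K[x₁,…,x_n] given by ∂_f(g) = Σᵢ x_i²·∂g/∂x_i + (Σᵢ a_i x_i)·g. Then ∂_f^p = 0. (Thus each twisted rank-one module R^f, for f = Σᵢ a_i x_i, is a module over H_q = K[∂]/(∂^p), and there are p^n such H_q-module structures on a rank-one free module over R_n.) -/

import Mathlib

open MvPolynomial Finsupp

noncomputable def twD (K : Type*) [CommRing K] (n : ℕ) (c : K) (i : Fin n) :
    MvPolynomial (Fin n) K →ₗ[K] MvPolynomial (Fin n) K :=
  (LinearMap.mulLeft K (X i ^ 2)).comp (pderiv i).toLinearMap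
    + LinearMap.mulLeft K (C c * X i)

lemma twD_apply {K : Type*} [CommRing K] {n : ℕ} (c : K) (i : Fin n)
    (g : MvPolynomial (Fin n) K) :
    twD K n c i g = X i ^ 2 * pderiv i g + (C c * X i) * g := rfl

lemma twD_monomial {K : Type*} [CommRing K] {n : ℕ} (c : K) (i : Fin n)
    (m : Fin n →₀ ℕ) (r : K) :
    twD K n c i (monomial m r) =
      ((m i : K) + c) • monomial (m + Finsupp.single i 1) r := by
  rw [twD_apply, pderiv_monomial, X_pow_eq_monomial, C_mul_X_eq_monomial,
    monomial_mul, monomial_mul, smul_monomial]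
  rcases Nat.eq_zero_or_pos (m i) with h | h
  · simp [h, add_comm m (Finsupp.single i 1)]
  · have hsub : Finsupp.single i 2 + (m - Finsupp.single i 1) = m + Finsupp.single i 1 := by
      ext j
      rcases eq_or_ne j i with rfl | hj
      · simp only [Finsupp.add_apply, Finsupp.tsub_apply, Finsupp.single_eq_same]
        omega
      · simp [Finsupp.add_apply, Finsupp.tsub_apply, Finsupp.single_eq_of_ne' (Ne.symm hj)]
    rw [hsub, add_comm (Finsupp.single i 1) m, ← map_add]
    congr 1
    simp [smul_eq_mul]
    ring

lemma twD_pow_monomial {K : Type*} [CommRing K] {n : ℕ} (c : K) (i : Fin n)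
    (k : ℕ) (m : Fin n →₀ ℕ) (r : K) :
    (twD K n c i ^ k) (monomial m r) =
      (∏ j ∈ Finset.range k, ((m i : K) + c + j)) • monomial (m + Finsupp.single i k) r := by
  induction k generalizing m with
  | zero => simp
  | succ k ih =>
      rw [pow_succ, Module.End.mul_apply, twD_monomial, map_smul, ih]
      rw [smul_smul, Finset.prod_range_succ']
      have h1 : ((m + Finsupp.single i 1) + Finsupp.single i k) = m + Finsupp.single i (k + 1) := by
        ext j
        rcases eq_or_ne j i with rfl | hj
        · simp only [Finsupp.add_apply, Finsupp.single_eq_same]; omega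
        · simp [Finsupp.add_apply, Finsupp.single_eq_of_ne' (Ne.symm hj)]
      rw [h1]
      congr 1
      have hmi : (m + Finsupp.single i 1 : Fin n →₀ ℕ) i = m i + 1 := by simp
      rw [Finset.prod_congr rfl (g := fun j : ℕ =>
          (m i : K) + c + (j + 1)) fun j _ => by rw [hmi]; push_cast; ring]
      push_cast
      ring

lemma prod_consecutive_eq_zero {p : ℕ} (hp : p.Prime) (K : Type*) [Field K] [CharP K p]
    (t : ℤ) : ∏ j ∈ Finset.range p, ((t : K) + j) = 0 := by
  haveI : Fact p.Prime := ⟨hp⟩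
  haveI : NeZero p := ⟨hp.ne_zero⟩
  have key : ∏ j ∈ Finset.range p, ((t : ZMod p) + j) = 0 := by
    apply Finset.prod_eq_zero (i := (-(t : ZMod p)).val)
    · exact Finset.mem_range.mpr (ZMod.val_lt _)
    · rw [ZMod.natCast_val, ZMod.cast_id]; ring
  have := congrArg (ZMod.castHom dvd_rfl K) key
  simpa using this

/-- The twisted `p`-differential `∂_f(g) = Σᵢ x_i²·∂g/∂x_i + (Σᵢ a_i x_i)·g` on
`K[x₁,…,x_n]` satisfies `∂_f^p = 0`, making `R^f` an `H_q`-module. -/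
theorem twisted_differential_pth_power_zero (p : ℕ) (hp : Nat.Prime p) (hodd : Odd p)
    (K : Type*) [Field K] [CharP K p] (n : ℕ) (hn : 0 < n) (a : Fin n → ℤ)
    (D : MvPolynomial (Fin n) K →ₗ[K] MvPolynomial (Fin n) K)
    (hD : ∀ g, D g = ∑ i, X i ^ 2 * pderiv i g + (∑ i, C ((a i : K)) * X i) * g) :
    D ^ p = 0 := by
  haveI : Fact p.Prime := ⟨hp⟩
  -- D is the sum of the commuting single-variable operators `twD`
  have hsum : D = ∑ i, twD K n ((a i : K)) i := by
    refine LinearMap.ext fun g => ?_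
    rw [hD]
    simp only [LinearMap.coe_sum, Finset.sum_apply, twD_apply, Finset.sum_add_distrib,
      Finset.sum_mul]
  -- each twD^p kills monomials
  have hpow : ∀ i, twD K n ((a i : K)) i ^ p = 0 := by
    intro i
    apply (basisMonomials (Fin n) K).ext
    intro m
    simp only [coe_basisMonomials, LinearMap.zero_apply]
    rw [twD_pow_monomial]
    have hz : (∏ j ∈ Finset.range p, ((m i : K) + (a i : K) + j)) = 0 := by
      have h := prod_consecutive_eq_zero hp K ((m i : ℤ) + a i)
      rw [← h]
      refine Finset.prod_congr rfl fun j _ => by push_cast; ring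
    rw [hz, zero_smul]
  -- the operators commute pairwise
  have hcomm : ∀ i j : Fin n, Commute (twD K n ((a i : K)) i) (twD K n ((a j : K)) j) := by
    intro i j
    rcases eq_or_ne i j with rfl | hij
    · exact Commute.refl _
    · apply (basisMonomials (Fin n) K).ext
      intro m
      simp only [coe_basisMonomials, Module.End.mul_apply]
      rw [twD_monomial, map_smul, twD_monomial, twD_monomial, map_smul, twD_monomial,
        smul_smul, smul_smul]
      have e1 : (m + Finsupp.single j 1 : Fin n →₀ ℕ) i = m i := by
        simp [Finsupp.single_eq_of_ne' (Ne.symm hij)]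
      have e2 : (m + Finsupp.single i 1 : Fin n →₀ ℕ) j = m j := by
        simp [Finsupp.single_eq_of_ne' hij]
      rw [show m + Finsupp.single j 1 + Finsupp.single i 1
            = m + Finsupp.single i 1 + Finsupp.single j 1 by
        rw [add_assoc, add_assoc, add_comm (Finsupp.single j 1)]]
      rw [e1, e2]
      congr 1
      ring
  -- char p for the endomorphism ring
  haveI : CharP (MvPolynomial (Fin n) K →ₗ[K] MvPolynomial (Fin n) K) p :=
    charP_of_injective_algebraMap' K p
  rw [hsum]
  -- sum of commuting p-th-power-zero elements
  have key : ∀ s : Finset (Fin n), (∑ i ∈ s, twD K n ((a i : K)) i) ^ p = 0 := by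
    intro s
    induction s using Finset.induction with
    | empty => simp [zero_pow hp.ne_zero]
    | @insert x s hx ih =>
        rw [Finset.sum_insert hx,
          add_pow_char_of_commute _ (Commute.sum_right _ _ _ fun j _ => hcomm x j),
          hpow, ih, add_zero]
  exact key Finset.univ
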